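/- Let Q ∈ (0,1), α(w) = w + Q/w, and v(w) = w⁵/(1 − Q w²) for w on the unit circle 𝕋. Then for every w ∈ 𝕋, (1/(2πi)) ∮_𝕋 (conj(v(τ)) − conj(v(w)))/(α(τ) − α(w)) · α'(τ) dτ = −v(1/w). -/

import Mathlib

open MeasureTheory Real Complex

lemma integral_exp_zpow (n : ℤ) (hn : n ≠ 0) :
    ∫ θ in (0:ℝ)..(2*Real.pi), Complex.exp (Complex.I*θ) ^ n = 0 := by
  have hIn : (Complex.I * n) ≠ 0 := by
    simp [Complex.I_ne_zero, hn]
  have key : ∀ θ : ℝ, HasDerivAt (fun t : ℝ => Complex.exp (Complex.I * t * n) / (Complex.I * n))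
      (Complex.exp (Complex.I * θ) ^ n) θ := by
    intro θ
    have h0 : HasDerivAt (fun z : ℂ => Complex.I * z * n) (Complex.I * n) (θ:ℂ) := by
      simpa using ((hasDerivAt_id (θ:ℂ)).const_mul Complex.I).mul_const (n:ℂ)
    have h1 : HasDerivAt (fun z : ℂ => Complex.exp (Complex.I * z * n) / (Complex.I * n))
        (Complex.exp (Complex.I * θ * n) * (Complex.I * n) / (Complex.I * n)) (θ:ℂ) :=
      (h0.cexp).div_const _
    rw [mul_div_assoc, div_self hIn, mul_one] at h1
    have h2 := h1.comp_ofReal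
    have : Complex.exp (Complex.I * θ * n) = Complex.exp (Complex.I * θ) ^ n := by
      rw [← Complex.exp_int_mul]; ring_nf
    rwa [this] at h2
  have hint : IntervalIntegrable (fun θ : ℝ => Complex.exp (Complex.I*θ) ^ n) volume 0 (2*Real.pi) := by
    apply Continuous.intervalIntegrable
    exact (Complex.continuous_exp.comp (continuous_const.mul Complex.continuous_ofReal)).zpow₀ n
      (fun x => Or.inl (Complex.exp_ne_zero _))
  rw [intervalIntegral.integral_eq_sub_of_hasDerivAt (fun θ _ => key θ) hint]
  have h2pi : Complex.exp (Complex.I * (2*(Real.pi:ℂ)) * n) = 1 := by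
    have := Complex.exp_int_mul_two_pi_mul_I n
    rw [← this]; congr 1; push_cast; ring
  push_cast
  rw [h2pi]
  field_simp
  simp

lemma integral_circle_inv (c : ℂ) (hc : ‖c‖ < 1) :
    ∫ θ in (0:ℝ)..(2*Real.pi), Complex.exp (Complex.I*θ) * (Complex.exp (Complex.I*θ) - c)⁻¹
      = 2*Real.pi := by
  have h := circleIntegral.integral_sub_inv_of_mem_ball (c := 0) (R := 1) (w := c)
    (by simpa using hc)
  simp only [circleIntegral, deriv_circleMap, circleMap, Complex.ofReal_one, one_mul,
    zero_add, smul_eq_mul] at h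
  have h2 : ∫ θ in (0:ℝ)..(2*Real.pi),
      (Complex.exp (Complex.I*θ) * (Complex.exp (Complex.I*θ) - c)⁻¹) * Complex.I
      = 2 * Real.pi * Complex.I := by
    rw [← h]
    apply intervalIntegral.integral_congr
    intro θ _
    simp only [mul_comm Complex.I (θ:ℂ)]
    ring
  rw [intervalIntegral.integral_mul_const] at h2
  have := mul_right_cancel₀ Complex.I_ne_zero h2
  exact this

lemma conj_unit (z : ℂ) (hz : ‖z‖ = 1) : (starRingEnd ℂ) z = z⁻¹ := by
  have h : z * (starRingEnd ℂ) z = 1 := by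
    rw [Complex.mul_conj, Complex.normSq_eq_norm_sq, hz]; norm_num
  exact (inv_eq_of_mul_eq_one_right h).symm

lemma conj_v_eq (Q : ℝ) (hQ1 : Q < 1) (hQ0 : 0 < Q) (z : ℂ) (hz : ‖z‖ = 1) :
    (starRingEnd ℂ) (z^5/(1-(Q:ℂ)*z^2)) = 1/(z^3*(z^2-(Q:ℂ))) := by
  have hz0 : z ≠ 0 := by intro h; rw [h] at hz; simp at hz
  have hz2Q : z^2 - (Q:ℂ) ≠ 0 := by
    intro h
    have : ‖z^2‖ = ‖(Q:ℂ)‖ := by rw [sub_eq_zero] at h; rw [h]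
    rw [norm_pow, hz, Complex.norm_real, Real.norm_eq_abs, abs_of_pos hQ0] at this
    simp at this; linarith
  have hden : 1 - (Q:ℂ)*((starRingEnd ℂ) z)^2 ≠ 0 := by
    rw [conj_unit z hz]
    intro h
    have h2 : (Q:ℂ) * (z⁻¹)^2 = 1 := by rw [sub_eq_zero] at h; exact h.symm
    have : ‖(Q:ℂ) * (z⁻¹)^2‖ = 1 := by rw [h2]; simp
    rw [norm_mul, norm_pow, norm_inv, hz, Complex.norm_real, Real.norm_eq_abs, abs_of_pos hQ0] at this
    simp at this; linarith
  rw [map_div₀, map_pow, map_sub, map_one, map_mul, Complex.conj_ofReal, map_pow,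
    conj_unit z hz]
  rw [div_eq_div_iff (by rw [← conj_unit z hz]; exact hden) (by
    exact mul_ne_zero (pow_ne_zero 3 hz0) hz2Q)]
  field_simp

lemma abs_ne_Q {Q : ℝ} (hQ0 : 0 < Q) (hQ1 : Q < 1) {u : ℂ} (hu : ‖u‖ = 1) :
    u - (Q:ℂ) ≠ 0 := by
  intro h
  rw [sub_eq_zero] at h
  rw [h, Complex.norm_real, Real.norm_eq_abs, abs_of_pos hQ0] at hu
  linarith

lemma pointwise_eq (Q : ℝ) (hQ0 : 0 < Q) (hQ1 : Q < 1) (w z : ℂ)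
    (hw : ‖w‖ = 1) (hz : ‖z‖ = 1) (hzw : z ≠ w) :
    (1/(z^3*(z^2-(Q:ℂ))) - 1/(w^3*(w^2-(Q:ℂ)))) /
        ((z + (Q:ℂ)/z) - (w + (Q:ℂ)/w)) * (1 - (Q:ℂ)/z^2) * z
      = (1/(Q:ℂ)) * (z^3)⁻¹ + ((w^2+(Q:ℂ))/((Q:ℂ)^2*w)) * (z^2)⁻¹
        + ((w^4+(Q:ℂ)*w^2+(Q:ℂ)^2)/((Q:ℂ)^3*w^2)) * z⁻¹
        + w^5/((Q:ℂ)^4*(w^2-(Q:ℂ)))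
        + (-(w^8+(Q:ℂ)^4)/((Q:ℂ)^4*w^3*(w^2-(Q:ℂ)))) * (z * (z - (Q:ℂ)/w)⁻¹) := by
  have hz0 : z ≠ 0 := by intro h; rw [h] at hz; simp at hz
  have hw0 : w ≠ 0 := by intro h; rw [h] at hw; simp at hw
  have hQ0' : (Q:ℂ) ≠ 0 := by exact_mod_cast hQ0.ne'
  have hz2 : z^2 - (Q:ℂ) ≠ 0 := abs_ne_Q hQ0 hQ1 (by rw [norm_pow, hz]; norm_num)
  have hw2 : w^2 - (Q:ℂ) ≠ 0 := abs_ne_Q hQ0 hQ1 (by rw [norm_pow, hw]; norm_num)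
  have hzwQ : z*w - (Q:ℂ) ≠ 0 := abs_ne_Q hQ0 hQ1 (by rw [norm_mul, hz, hw]; norm_num)
  have hzw' : z - w ≠ 0 := sub_ne_zero.mpr hzw
  have hzQw : z - (Q:ℂ)/w ≠ 0 := by
    have heq : z - (Q:ℂ)/w = (z*w - (Q:ℂ))/w := by field_simp
    rw [heq]
    exact div_ne_zero hzwQ hw0
  have hαdiff : (z + (Q:ℂ)/z) - (w + (Q:ℂ)/w) = (z-w)*(z*w-(Q:ℂ))/(z*w) := by
    field_simp
    ring
  rw [hαdiff]
  rw [show (1:ℂ) - (Q:ℂ)/z^2 = (z^2-(Q:ℂ))/z^2 from by field_simp,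
     show z - (Q:ℂ)/w = (z*w-(Q:ℂ))/w from by field_simp,
     div_div_eq_mul_div, inv_div]
  simp only [inv_eq_one_div, div_mul_div_comm, mul_div_assoc', div_mul_eq_mul_div, mul_one,
    one_mul, div_div]
  rw [div_sub_div _ _ (mul_ne_zero (pow_ne_zero 3 hz0) hz2) (mul_ne_zero (pow_ne_zero 3 hw0) hw2)]
  simp only [div_mul_eq_mul_div, div_div, mul_one, one_mul]
  have d1 : (Q:ℂ)*z^3 ≠ 0 := mul_ne_zero hQ0' (pow_ne_zero 3 hz0)
  have d2 : (Q:ℂ)^2*w*z^2 ≠ 0 := mul_ne_zero (mul_ne_zero (pow_ne_zero 2 hQ0') hw0) (pow_ne_zero 2 hz0)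
  have d3 : (Q:ℂ)^3*w^2*z ≠ 0 := mul_ne_zero (mul_ne_zero (pow_ne_zero 3 hQ0') (pow_ne_zero 2 hw0)) hz0
  have d4 : (Q:ℂ)^4*(w^2-(Q:ℂ)) ≠ 0 := mul_ne_zero (pow_ne_zero 4 hQ0') hw2
  have d5 : (Q:ℂ)^4*w^3*(w^2-(Q:ℂ))*(z*w-(Q:ℂ)) ≠ 0 :=
    mul_ne_zero (mul_ne_zero (mul_ne_zero (pow_ne_zero 4 hQ0') (pow_ne_zero 3 hw0)) hw2) hzwQ
  rw [div_add_div _ _ d1 d2, div_add_div _ _ (mul_ne_zero d1 d2) d3,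
      div_add_div _ _ (mul_ne_zero (mul_ne_zero d1 d2) d3) d4,
      div_add_div _ _ (mul_ne_zero (mul_ne_zero (mul_ne_zero d1 d2) d3) d4) d5]
  rw [div_eq_div_iff
    (mul_ne_zero (mul_ne_zero (mul_ne_zero (pow_ne_zero 3 hz0) hz2)
      (mul_ne_zero (pow_ne_zero 3 hw0) hw2))
      (mul_ne_zero (mul_ne_zero hzw' hzwQ) (pow_ne_zero 2 hz0)))
    (mul_ne_zero (mul_ne_zero (mul_ne_zero (mul_ne_zero d1 d2) d3) d4) d5)]
  ring

theorem contour_integral_conj_v (Q : ℝ) (hQ : Q ∈ Set.Ioo (0:ℝ) 1)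
    (w : ℂ) (hw : ‖w‖ = 1) :
    let α : ℂ → ℂ := fun z => z + (Q : ℂ) / z
    let v : ℂ → ℂ := fun z => z ^ 5 / (1 - (Q : ℂ) * z ^ 2)
    (1 / (2 * (Real.pi : ℂ))) *
        ∫ θ in (0:ℝ)..(2 * Real.pi),
          (((starRingEnd ℂ) (v (Complex.exp (Complex.I * θ))) - (starRingEnd ℂ) (v w)) /
              (α (Complex.exp (Complex.I * θ)) - α w)) *
            deriv α (Complex.exp (Complex.I * θ)) * Complex.exp (Complex.I * θ) =
      -v w⁻¹ := by
  intro α v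
  obtain ⟨hQ0, hQ1⟩ := hQ
  have hQ0' : (Q:ℂ) ≠ 0 := by exact_mod_cast hQ0.ne'
  have hw0 : w ≠ 0 := by intro h; rw [h] at hw; simp at hw
  have hw2 : w^2 - (Q:ℂ) ≠ 0 := abs_ne_Q hQ0 hQ1 (by rw [norm_pow, hw]; norm_num)
  have habs : ∀ θ : ℝ, ‖Complex.exp (Complex.I*θ)‖ = 1 := by
    intro θ; rw [mul_comm]; exact Complex.norm_exp_ofReal_mul_I θ
  have hexp0 : ∀ θ : ℝ, Complex.exp (Complex.I*θ) ≠ 0 := fun θ => Complex.exp_ne_zero _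
  -- derivative of α
  have hα : ∀ u : ℂ, u ≠ 0 → deriv α u = 1 - (Q:ℂ)/u^2 := by
    intro u hu
    have h2 : HasDerivAt (fun y : ℂ => (Q:ℂ) * y⁻¹) ((Q:ℂ) * -(u^2)⁻¹) u :=
      (hasDerivAt_inv hu).const_mul _
    have h3 : HasDerivAt α (1 + (Q:ℂ) * -(u^2)⁻¹) u := by
      have h4 := (hasDerivAt_id u).add h2
      have : α = fun y : ℂ => y + (Q:ℂ) * y⁻¹ := by
        funext y; show y + (Q:ℂ)/y = _; rw [div_eq_mul_inv]
      rw [this]; exact h4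
    rw [h3.deriv, div_eq_mul_inv]; ring
  -- the exceptional set has measure zero
  have hmes : (volume : Measure ℝ) {θ : ℝ | Complex.exp (Complex.I*θ) = w} = 0 := by
    by_cases hne : ∃ θ₀ : ℝ, Complex.exp (Complex.I*θ₀) = w
    · obtain ⟨θ₀, hθ₀⟩ := hne
      refine Set.Countable.measure_zero ?_ _
      refine Set.Countable.mono ?_ (Set.countable_range (fun n : ℤ => θ₀ + n*(2*Real.pi)))
      intro θ hθ
      simp only [Set.mem_setOf_eq] at hθ
      rw [← hθ₀, Complex.exp_eq_exp_iff_exists_int] at hθ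
      obtain ⟨n, hn⟩ := hθ
      refine ⟨n, ?_⟩
      have hc : (θ₀:ℂ) + n*(2*Real.pi) = (θ:ℂ) := by
        apply mul_left_cancel₀ Complex.I_ne_zero
        rw [hn]; push_cast; ring
      exact_mod_cast hc
    · have hempty : {θ : ℝ | Complex.exp (Complex.I*θ) = w} = ∅ := by
        ext θ; simp only [Set.mem_setOf_eq, Set.mem_empty_iff_false, iff_false]
        exact fun h => hne ⟨θ, h⟩
      simp [hempty]
  have hae : ∀ᵐ (θ : ℝ) ∂(volume : Measure ℝ), Complex.exp (Complex.I*(θ:ℂ)) ≠ w := by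
    rw [MeasureTheory.ae_iff]
    convert hmes using 2
    simp
  -- replace integrand a.e.
  have hcongr :
      ∫ θ in (0:ℝ)..(2 * Real.pi),
          (((starRingEnd ℂ) (v (Complex.exp (Complex.I * θ))) - (starRingEnd ℂ) (v w)) /
              (α (Complex.exp (Complex.I * θ)) - α w)) *
            deriv α (Complex.exp (Complex.I * θ)) * Complex.exp (Complex.I * θ)
        = ∫ θ in (0:ℝ)..(2 * Real.pi),
            ((1/(Q:ℂ)) * ((Complex.exp (Complex.I*θ))^3)⁻¹
              + ((w^2+(Q:ℂ))/((Q:ℂ)^2*w)) * ((Complex.exp (Complex.I*θ))^2)⁻¹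
              + ((w^4+(Q:ℂ)*w^2+(Q:ℂ)^2)/((Q:ℂ)^3*w^2)) * (Complex.exp (Complex.I*θ))⁻¹
              + w^5/((Q:ℂ)^4*(w^2-(Q:ℂ)))
              + (-(w^8+(Q:ℂ)^4)/((Q:ℂ)^4*w^3*(w^2-(Q:ℂ)))) *
                  (Complex.exp (Complex.I*θ) * (Complex.exp (Complex.I*θ) - (Q:ℂ)/w)⁻¹)) := by
    apply intervalIntegral.integral_congr_ae
    filter_upwards [hae] with θ hθ _
    have hz := habs θ
    have e1 : (starRingEnd ℂ) (v (Complex.exp (Complex.I*θ))) =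
        1/((Complex.exp (Complex.I*θ))^3*((Complex.exp (Complex.I*θ))^2-(Q:ℂ))) :=
      conj_v_eq Q hQ1 hQ0 _ hz
    have e2 : (starRingEnd ℂ) (v w) = 1/(w^3*(w^2-(Q:ℂ))) := conj_v_eq Q hQ1 hQ0 w hw
    have e3 : α (Complex.exp (Complex.I*θ)) = Complex.exp (Complex.I*θ) + (Q:ℂ)/Complex.exp (Complex.I*θ) := rfl
    have e4 : α w = w + (Q:ℂ)/w := rfl
    rw [e1, e2, e3, e4, hα _ (hexp0 θ)]
    have hzinv : ((Complex.exp (Complex.I*θ))^2)⁻¹ = ((Complex.exp (Complex.I*θ))^2)⁻¹ := rfl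
    have := pointwise_eq Q hQ0 hQ1 w (Complex.exp (Complex.I*θ)) hw hz hθ
    rw [one_div (Q:ℂ)] at this ⊢
    convert this using 2
  rw [hcongr]
  -- split the integral and evaluate
  have hexpc : Continuous fun θ : ℝ => Complex.exp (Complex.I*θ) :=
    Complex.continuous_exp.comp (continuous_const.mul Complex.continuous_ofReal)
  have hQw : ‖(Q:ℂ)/w‖ < 1 := by
    rw [norm_div, hw, Complex.norm_real, Real.norm_eq_abs, abs_of_pos hQ0]; simpa using hQ1
  have hsub0 : ∀ θ : ℝ, Complex.exp (Complex.I*θ) - (Q:ℂ)/w ≠ 0 := by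
    intro θ
    intro h
    rw [sub_eq_zero] at h
    rw [← h] at hQw
    rw [habs θ] at hQw
    exact lt_irrefl 1 hQw
  have i1 : IntervalIntegrable (fun θ : ℝ => (1/(Q:ℂ)) * ((Complex.exp (Complex.I*θ))^3)⁻¹) volume 0 (2*Real.pi) :=
    (continuous_const.mul ((hexpc.pow 3).inv₀ fun θ => pow_ne_zero _ (hexp0 θ))).intervalIntegrable _ _
  have i2 : IntervalIntegrable (fun θ : ℝ => ((w^2+(Q:ℂ))/((Q:ℂ)^2*w)) * ((Complex.exp (Complex.I*θ))^2)⁻¹) volume 0 (2*Real.pi) :=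
    (continuous_const.mul ((hexpc.pow 2).inv₀ fun θ => pow_ne_zero _ (hexp0 θ))).intervalIntegrable _ _
  have i3 : IntervalIntegrable (fun θ : ℝ => ((w^4+(Q:ℂ)*w^2+(Q:ℂ)^2)/((Q:ℂ)^3*w^2)) * (Complex.exp (Complex.I*θ))⁻¹) volume 0 (2*Real.pi) :=
    (continuous_const.mul (hexpc.inv₀ hexp0)).intervalIntegrable _ _
  have i4 : IntervalIntegrable (fun _ : ℝ => w^5/((Q:ℂ)^4*(w^2-(Q:ℂ)))) volume 0 (2*Real.pi) :=
    intervalIntegrable_const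
  have i5 : IntervalIntegrable (fun θ : ℝ => (-(w^8+(Q:ℂ)^4)/((Q:ℂ)^4*w^3*(w^2-(Q:ℂ)))) *
      (Complex.exp (Complex.I*θ) * (Complex.exp (Complex.I*θ) - (Q:ℂ)/w)⁻¹)) volume 0 (2*Real.pi) :=
    (continuous_const.mul (hexpc.mul ((hexpc.sub continuous_const).inv₀ hsub0))).intervalIntegrable _ _
  rw [intervalIntegral.integral_add (((i1.add i2).add i3).add i4) i5,
      intervalIntegral.integral_add ((i1.add i2).add i3) i4,
      intervalIntegral.integral_add (i1.add i2) i3,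
      intervalIntegral.integral_add i1 i2,
      intervalIntegral.integral_const_mul, intervalIntegral.integral_const_mul,
      intervalIntegral.integral_const_mul, intervalIntegral.integral_const_mul]
  have j1 : ∫ θ in (0:ℝ)..(2*Real.pi), ((Complex.exp (Complex.I*θ))^3)⁻¹ = 0 := by
    have := integral_exp_zpow (-3) (by norm_num)
    simpa [zpow_neg] using this
  have j2 : ∫ θ in (0:ℝ)..(2*Real.pi), ((Complex.exp (Complex.I*θ))^2)⁻¹ = 0 := by
    have := integral_exp_zpow (-2) (by norm_num)
    simpa [zpow_neg] using this
  have j3 : ∫ θ in (0:ℝ)..(2*Real.pi), (Complex.exp (Complex.I*θ))⁻¹ = 0 := by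
    have := integral_exp_zpow (-1) (by norm_num)
    simpa [zpow_neg] using this
  have j5 : ∫ θ in (0:ℝ)..(2*Real.pi),
      Complex.exp (Complex.I*θ) * (Complex.exp (Complex.I*θ) - (Q:ℂ)/w)⁻¹ = 2*Real.pi :=
    integral_circle_inv _ hQw
  rw [j1, j2, j3, j5, intervalIntegral.integral_const]
  have hπ : ((Real.pi:ℝ) : ℂ) ≠ 0 := by exact_mod_cast Real.pi_ne_zero
  have hv : v w⁻¹ = 1/(w^3*(w^2-(Q:ℂ))) := by
    show (w⁻¹)^5/(1-(Q:ℂ)*(w⁻¹)^2) = _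
    rw [div_eq_div_iff]
    · field_simp
    · intro h
      apply hw2
      have h2 : (1-(Q:ℂ)*(w⁻¹)^2) * w^2 = 0 := by rw [h]; ring
      have h3 : w^2 - (Q:ℂ) = (1-(Q:ℂ)*(w⁻¹)^2) * w^2 := by field_simp
      rw [h3, h2]
    · exact mul_ne_zero (pow_ne_zero 3 hw0) hw2
  rw [hv]
  push_cast
  field_simp
  rw [Complex.real_smul]
  push_cast
  field_simp
  ring
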